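/- (Corollary 1) Let b > 1 and κ > 0. Suppose for each n ∈ ℕ we have p(n) ∈ ℕ, a continuously differentiable cost Cₙ : (Fin p(n) → ℝ) → ℝ satisfying the parameter shift rule in coordinate j(n) (for all θ, ∂_{j(n)}Cₙ(θ) = (1/2)(Cₙ(θ + (π/2)e_{j(n)}) − Cₙ(θ − (π/2)e_{j(n)}))), a probability measure μₙ invariant under θ ↦ θ ± (π/2)e_{j(n)}, and a coordinate i(n) such that ∂_{i(n)}Cₙ is square-integrable with ∫ ∂_{i(n)}Cₙ dμₙ = 0 and variance Vₙ ≤ κ·b^{−n} (a barren plateau). Then for every c > 0 and every n, μₙ{ θ : |∂_{i(n)}∂_{j(n)}Cₙ(θ)| ≥ c } ≤ 2κ·b^{−n} / c², i.e., the Hessian matrix elements are exponentially suppressed in n with high probability. -/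

import Mathlib

open MeasureTheory

/-- Partial derivative of `C` with respect to the `i`-th coordinate. -/
noncomputable def pderiv' {p : ℕ} (i : Fin p) (C : (Fin p → ℝ) → ℝ) : (Fin p → ℝ) → ℝ :=
  fun θ => deriv (fun t => C (Function.update θ i t)) (θ i)

lemma update_add_eq {p : ℕ} (θ s : Fin p → ℝ) (i : Fin p) (t : ℝ) :
    Function.update θ i t + s = Function.update (θ + s) i (t + s i) := by
  funext x
  by_cases h : x = i
  · subst h; simp
  · simp [Function.update_of_ne h]

lemma update_sub_eq {p : ℕ} (θ s : Fin p → ℝ) (i : Fin p) (t : ℝ) :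
    Function.update θ i t - s = Function.update (θ - s) i (t - s i) := by
  funext x
  by_cases h : x = i
  · subst h; simp
  · simp [Function.update_of_ne h]

lemma hess_eq {p : ℕ} (C : (Fin p → ℝ) → ℝ) (hC : Differentiable ℝ C) (i j : Fin p)
    (s : Fin p → ℝ)
    (hshift : ∀ θ, pderiv' j C θ = (1 / 2) * (C (θ + s) - C (θ - s))) (θ : Fin p → ℝ) :
    pderiv' i (pderiv' j C) θ =
      (1 / 2) * (pderiv' i C (θ + s) - pderiv' i C (θ - s)) := by
  have dg : ∀ (x : Fin p → ℝ) (u : ℝ),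
      DifferentiableAt ℝ (fun v => C (Function.update x i v)) u := by
    intro x u
    exact DifferentiableAt.comp u (hC _) (hasDerivAt_update x i u).differentiableAt
  have h1 : HasDerivAt (fun t => C (Function.update θ i t + s))
      (pderiv' i C (θ + s)) (θ i) := by
    have key : (fun t => C (Function.update θ i t + s)) =
        (fun t => C (Function.update (θ + s) i (t + s i))) := by
      funext t; rw [update_add_eq]
    rw [key]
    have h := HasDerivAt.comp_add_const (f := fun v => C (Function.update (θ + s) i v))
      (θ i) (s i) ((dg (θ + s) (θ i + s i)).hasDerivAt)
    convert h using 1 <;> rfl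
  have h2 : HasDerivAt (fun t => C (Function.update θ i t - s))
      (pderiv' i C (θ - s)) (θ i) := by
    have key : (fun t => C (Function.update θ i t - s)) =
        (fun t => C (Function.update (θ - s) i (t - s i))) := by
      funext t; rw [update_sub_eq]
    rw [key]
    have h := HasDerivAt.comp_sub_const (f := fun v => C (Function.update (θ - s) i v))
      (θ i) (s i) ((dg (θ - s) (θ i - s i)).hasDerivAt)
    convert h using 1 <;> rfl
  have htot : HasDerivAt (fun t => (1 / 2 : ℝ) *
      (C (Function.update θ i t + s) - C (Function.update θ i t - s)))
      ((1 / 2) * (pderiv' i C (θ + s) - pderiv' i C (θ - s))) (θ i) :=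
    (h1.sub h2).const_mul (1 / 2 : ℝ)
  have heq2 : (fun t => pderiv' j C (Function.update θ i t)) =
      (fun t => (1 / 2 : ℝ) *
        (C (Function.update θ i t + s) - C (Function.update θ i t - s))) :=
    funext fun t => hshift _
  have heq : pderiv' i (pderiv' j C) θ =
      deriv (fun t => pderiv' j C (Function.update θ i t)) (θ i) := rfl
  rw [heq, heq2, htot.deriv]


/-- Corollary 1: in a barren plateau, where the variance of `∂ᵢCₙ` is bounded by `κ·b⁻ⁿ`,
the Hessian matrix elements are exponentially suppressed in `n` with high probability:
`μₙ{θ : |∂ᵢ∂ⱼCₙ(θ)| ≥ c} ≤ 2κ·b⁻ⁿ/c²`. -/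
theorem cor1_hessian_barren_plateau
    (b κ : ℝ) (hb : 1 < b) (hκ : 0 < κ)
    (p : ℕ → ℕ) (C : ∀ n, (Fin (p n) → ℝ) → ℝ)
    (hC1 : ∀ n, ContDiff ℝ 1 (C n))
    (j : ∀ n, Fin (p n))
    (hshift : ∀ n, ∀ θ : Fin (p n) → ℝ, pderiv' (j n) (C n) θ =
      (1 / 2) * ((C n) (θ + Pi.single (j n) (Real.pi / 2))
        - (C n) (θ - Pi.single (j n) (Real.pi / 2))))
    (μ : ∀ n, Measure (Fin (p n) → ℝ)) (hprob : ∀ n, IsProbabilityMeasure (μ n))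
    (hμ_plus : ∀ n, MeasurePreserving (fun θ => θ + Pi.single (j n) (Real.pi / 2)) (μ n) (μ n))
    (hμ_minus : ∀ n, MeasurePreserving (fun θ => θ - Pi.single (j n) (Real.pi / 2)) (μ n) (μ n))
    (i : ∀ n, Fin (p n))
    (hL2 : ∀ n, MemLp (pderiv' (i n) (C n)) 2 (μ n))
    (hmean : ∀ n, ∫ θ, pderiv' (i n) (C n) θ ∂(μ n) = 0)
    (V : ℕ → ℝ) (hV : ∀ n, V n = ∫ θ, (pderiv' (i n) (C n) θ) ^ 2 ∂(μ n))
    (hBP : ∀ n, V n ≤ κ * b⁻¹ ^ n)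
    (c : ℝ) (hc : 0 < c) (n : ℕ) :
    μ n {θ | c ≤ |pderiv' (i n) (pderiv' (j n) (C n)) θ|} ≤
      ENNReal.ofReal (2 * κ * b⁻¹ ^ n / c ^ 2) := by
  haveI := hprob n
  set D := pderiv' (i n) (C n) with hD
  set s : Fin (p n) → ℝ := Pi.single (j n) (Real.pi / 2) with hs
  set A : Set (Fin (p n) → ℝ) := {θ | c ≤ |D θ|} with hA
  -- pointwise identity for the Hessian element
  have hpt : ∀ θ, pderiv' (i n) (pderiv' (j n) (C n)) θ =
      (1 / 2) * (D (θ + s) - D (θ - s)) :=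
    hess_eq (C n) ((hC1 n).differentiable one_ne_zero) (i n) (j n) s (hshift n)
  -- null measurability of A
  have hDm : AEMeasurable D (μ n) := (hL2 n).aestronglyMeasurable.aemeasurable
  have hDabs : AEMeasurable (fun θ => |D θ|) (μ n) := by
    simpa [Real.norm_eq_abs] using hDm.norm
  have hAnm : NullMeasurableSet A (μ n) :=
    nullMeasurableSet_le aemeasurable_const hDabs
  -- inclusion into the two shifted sets
  have hsub : {θ | c ≤ |pderiv' (i n) (pderiv' (j n) (C n)) θ|} ⊆
      ((fun θ => θ + s) ⁻¹' A) ∪ ((fun θ => θ - s) ⁻¹' A) := by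
    intro θ hθ
    simp only [Set.mem_setOf_eq, hpt] at hθ
    by_contra h
    simp only [Set.mem_union, Set.mem_preimage, hA, Set.mem_setOf_eq, not_or, not_le] at h
    obtain ⟨h1, h2⟩ := h
    have habs : |D (θ + s) - D (θ - s)| ≤ |D (θ + s)| + |D (θ - s)| := abs_sub _ _
    have : |(1 / 2 : ℝ) * (D (θ + s) - D (θ - s))| < c := by
      rw [abs_mul, abs_of_pos (by norm_num : (0:ℝ) < 1/2)]
      nlinarith [abs_nonneg (D (θ + s) - D (θ - s))]
    linarith
  -- Chebyshev bound on μ A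
  have hVnonneg : 0 ≤ V n := by
    rw [hV n]
    exact integral_nonneg fun θ => sq_nonneg _
  have hAeq : A = {θ | c ^ 2 ≤ D θ ^ 2} := by
    ext θ
    simp only [hA, Set.mem_setOf_eq]
    rw [← sq_abs (D θ)]
    constructor
    · intro h; exact pow_le_pow_left₀ hc.le h 2
    · intro h; exact le_of_pow_le_pow_left₀ two_ne_zero (abs_nonneg _) h
  have hcheb : (μ n) A ≤ ENNReal.ofReal (V n / c ^ 2) := by
    have hmark := mul_meas_ge_le_integral_of_nonneg
      (f := fun θ => D θ ^ 2) (μ := μ n)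
      (Filter.Eventually.of_forall fun θ => sq_nonneg _) (hL2 n).integrable_sq (c ^ 2)
    rw [← hV n] at hmark
    rw [ENNReal.le_ofReal_iff_toReal_le (measure_ne_top _ _)
      (div_nonneg hVnonneg (sq_nonneg c)), hAeq,
      le_div_iff₀ (by positivity : (0:ℝ) < c ^ 2), mul_comm]
    exact hmark
  -- combine
  calc μ n {θ | c ≤ |pderiv' (i n) (pderiv' (j n) (C n)) θ|}
      ≤ μ n (((fun θ => θ + s) ⁻¹' A) ∪ ((fun θ => θ - s) ⁻¹' A)) := measure_mono hsub
    _ ≤ μ n ((fun θ => θ + s) ⁻¹' A) + μ n ((fun θ => θ - s) ⁻¹' A) := measure_union_le _ _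
    _ = μ n A + μ n A := by
        rw [(hμ_plus n).measure_preimage hAnm, (hμ_minus n).measure_preimage hAnm]
    _ ≤ ENNReal.ofReal (V n / c ^ 2) + ENNReal.ofReal (V n / c ^ 2) := add_le_add hcheb hcheb
    _ = ENNReal.ofReal (2 * V n / c ^ 2) := by
        rw [← ENNReal.ofReal_add (by positivity) (by positivity)]
        ring_nf
    _ ≤ ENNReal.ofReal (2 * κ * b⁻¹ ^ n / c ^ 2) := by
        apply ENNReal.ofReal_le_ofReal
        have hbpos : (0:ℝ) < b⁻¹ ^ n := by positivity
        have h2 : 2 * V n ≤ 2 * κ * b⁻¹ ^ n := by nlinarith [hBP n]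
        exact div_le_div_of_nonneg_right h2 (by positivity : (0:ℝ) ≤ c ^ 2)
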